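/- Let r ≥ 3, let c be an edge-coloring of the complete r-partite graph K_{n₁,n₂,…,n_r} with no rainbow 4-cycle, and suppose that for every vertex v at least 2 colors are starred at v. Then for every vertex x, exactly 2 colors are starred at x, i.e., dᶜ(x) = 2. -/

import Mathlib

open Finset

/-- The complete `r`-partite graph with parts of sizes `n 0, n 1, …, n (r-1)`. -/
def Kpartite (r : ℕ) (n : ℕ → ℕ) : SimpleGraph ((i : Fin r) × Fin (n i)) :=
  SimpleGraph.completeMultipartiteGraph fun i : Fin r => Fin (n i)

/-- The edge-coloring `c` contains a rainbow 3-cycle in `G`. -/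
def RainbowC3 {V α : Type*} (G : SimpleGraph V) (c : Sym2 V → α) : Prop :=
  ∃ a b d : V, G.Adj a b ∧ G.Adj b d ∧ G.Adj d a ∧
    c s(a, b) ≠ c s(b, d) ∧ c s(b, d) ≠ c s(d, a) ∧ c s(a, b) ≠ c s(d, a)

/-- The edge-coloring `c` contains a rainbow 4-cycle in `G`. -/
def RainbowC4 {V α : Type*} (G : SimpleGraph V) (c : Sym2 V → α) : Prop :=
  ∃ a b d e : V, G.Adj a b ∧ G.Adj b d ∧ G.Adj d e ∧ G.Adj e a ∧
    a ≠ d ∧ b ≠ e ∧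
    c s(a, b) ≠ c s(b, d) ∧ c s(a, b) ≠ c s(d, e) ∧ c s(a, b) ≠ c s(e, a) ∧
    c s(b, d) ≠ c s(d, e) ∧ c s(b, d) ≠ c s(e, a) ∧ c s(d, e) ≠ c s(e, a)

/-- The coloring `c` uses every one of the `k` colors on at least one edge of `G`
(i.e. it uses exactly `k` colors). -/
def SurjOnEdges {V : Type*} {k : ℕ} (G : SimpleGraph V) (c : Sym2 V → Fin k) : Prop :=
  ∀ i : Fin k, ∃ e ∈ G.edgeSet, c e = i

/-- The color `a` is starred at `x` under the coloring `c`: every edge of `G` with color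
`a` is incident to `x` (so the edges of color `a` form a star centered at `x`). -/
def Starred {V α : Type*} (G : SimpleGraph V) (c : Sym2 V → α) (a : α) (x : V) : Prop :=
  ∀ e ∈ G.edgeSet, c e = a → x ∈ e

/-- The set of colors that appear on some edge of `G` and are starred at `v`. -/
def starredColors {V α : Type*} (G : SimpleGraph V) (c : Sym2 V → α) (v : V) : Set α :=
  {a : α | (∃ e ∈ G.edgeSet, c e = a) ∧ Starred G c a v}

/-- A starred color at `v` appears on an edge at `v`. -/
lemma starred_edge {V α : Type*} {G : SimpleGraph V} {c : Sym2 V → α} {v : V} {a : α}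
    (h : a ∈ starredColors G c v) : ∃ u, G.Adj v u ∧ c s(v, u) = a := by
  obtain ⟨⟨e, he, hce⟩, hs⟩ := h
  have hv : v ∈ e := hs e he hce
  induction e using Sym2.inductionOn with
  | hf p q =>
    rw [Sym2.mem_iff] at hv
    rw [SimpleGraph.mem_edgeSet] at he
    rcases hv with rfl | rfl
    · exact ⟨q, he, hce⟩
    · exact ⟨p, he.symm, by rwa [Sym2.eq_swap]⟩

/-- No three distinct colors can be starred at a single vertex. -/
lemma no_three (r : ℕ) (n : ℕ → ℕ)
    {α : Type*} (c : Sym2 ((i : Fin r) × Fin (n i)) → α)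
    (hnr : ¬ RainbowC4 (Kpartite r n) c)
    (hstar : ∀ v : (i : Fin r) × Fin (n i), ∃ a b : α, a ≠ b ∧
      a ∈ starredColors (Kpartite r n) c v ∧ b ∈ starredColors (Kpartite r n) c v)
    (x : (i : Fin r) × Fin (n i)) (a₁ a₂ a₃ : α)
    (h12 : a₁ ≠ a₂) (h13 : a₁ ≠ a₃) (h23 : a₂ ≠ a₃)
    (H1 : a₁ ∈ starredColors (Kpartite r n) c x)
    (H2 : a₂ ∈ starredColors (Kpartite r n) c x)
    (H3 : a₃ ∈ starredColors (Kpartite r n) c x) : False := by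
  set G := Kpartite r n with hG
  have hadj : ∀ u v : (i : Fin r) × Fin (n i), G.Adj u v ↔ u.1 ≠ v.1 := fun _ _ => Iff.rfl
  obtain ⟨u₁, hu₁, hc₁⟩ := starred_edge H1
  obtain ⟨u₂, hu₂, hc₂⟩ := starred_edge H2
  obtain ⟨u₃, hu₃, hc₃⟩ := starred_edge H3
  have hS1 := H1.2
  have hS2 := H2.2
  have hS3 := H3.2
  have hne12 : u₁ ≠ u₂ := fun h => h12 (by rw [← hc₁, ← hc₂, h])
  have hne13 : u₁ ≠ u₃ := fun h => h13 (by rw [← hc₁, ← hc₃, h])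
  have hne23 : u₂ ≠ u₃ := fun h => h23 (by rw [← hc₂, ← hc₃, h])
  -- a color starred at some v ∉ {x, u} cannot be the color of the edge s(x,u)
  have notst : ∀ (v u : (i : Fin r) × Fin (n i)) (a : α), G.Adj x u → c s(x, u) = a →
      v ≠ x → v ≠ u → ¬ Starred G c a v := by
    intro v u a hxu hcu hvx hvu hst
    have := hst s(x, u) ((SimpleGraph.mem_edgeSet G).mpr hxu) hcu
    rw [Sym2.mem_iff] at this
    rcases this with rfl | rfl
    · exact hvx rfl
    · exact hvu rfl
  -- the key step: if β is starred at u and appears on edge s(u,w), w ≠ x,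
  -- and a, b are starred at x appearing on xu, xv, then w is in the same part as v
  have step : ∀ (u v w : (i : Fin r) × Fin (n i)) (a b β : α),
      G.Adj x u → G.Adj x v → G.Adj u w → w ≠ x → u ≠ v →
      c s(x, u) = a → c s(x, v) = b → c s(u, w) = β →
      a ≠ b → β ≠ a → β ≠ b →
      Starred G c a x → Starred G c b x → Starred G c β u → w.1 = v.1 := by
    intro u v w a b β hxu hxv huw hwx huv hca hcb hcβ hab hβa hβb hsa hsb hsβ
    by_contra hpart
    have hwv : G.Adj w v := (hadj w v).mpr hpart
    -- the fourth color
    set δ := c s(v, w) with hδ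
    have hδa : δ ≠ a := by
      intro h
      have := hsa s(v, w) ((SimpleGraph.mem_edgeSet G).mpr hwv.symm) (hδ.symm.trans h)
      rw [Sym2.mem_iff] at this
      rcases this with rfl | rfl
      · exact hxv.ne rfl
      · exact hwx rfl
    have hδb : δ ≠ b := by
      intro h
      have := hsb s(v, w) ((SimpleGraph.mem_edgeSet G).mpr hwv.symm) (hδ.symm.trans h)
      rw [Sym2.mem_iff] at this
      rcases this with rfl | rfl
      · exact hxv.ne rfl
      · exact hwx rfl
    have hδβ : δ ≠ β := by
      intro h
      have := hsβ s(v, w) ((SimpleGraph.mem_edgeSet G).mpr hwv.symm) (hδ.symm.trans h)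
      rw [Sym2.mem_iff] at this
      rcases this with rfl | rfl
      · exact huv rfl
      · exact huw.ne rfl
    -- rainbow 4-cycle w, u, x, v
    refine hnr ⟨w, u, x, v, huw.symm, hxu.symm, hxv, hwv.symm, hwx, huv, ?_, ?_, ?_, ?_, ?_, ?_⟩
    · rw [Sym2.eq_swap, hcβ, Sym2.eq_swap, hca]; exact hβa
    · rw [Sym2.eq_swap, hcβ, hcb]; exact hβb
    · rw [Sym2.eq_swap, hcβ]; exact hδβ.symm
    · rw [Sym2.eq_swap, hca, hcb]; exact hab
    · rw [Sym2.eq_swap, hca]; exact hδa.symm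
    · rw [hcb]; exact hδb.symm
  -- at u₁: a₂ and a₃ are not starred, so there is β starred at u₁ with β ∉ {a₁,a₂,a₃}
  have get_fresh : ∀ (u : (i : Fin r) × Fin (n i)) (a b d : α) (v w : (i : Fin r) × Fin (n i)),
      G.Adj x u → G.Adj x v → G.Adj x w → u ≠ v → u ≠ w →
      c s(x, u) = a → c s(x, v) = b → c s(x, w) = d →
      ∃ β, β ≠ a ∧ β ≠ b ∧ β ≠ d ∧ β ∈ starredColors G c u := by
    intro u a b d v w hxu hxv hxw huv huw hca hcb hcd
    obtain ⟨b₁, b₂, hb12, hb₁, hb₂⟩ := hstar u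
    have hnb : ∀ β ∈ starredColors G c u, β ≠ b ∧ β ≠ d := by
      intro β hβ
      constructor
      · intro h; exact notst u v b hxv hcb hxu.ne' huv (h ▸ hβ.2)
      · intro h; exact notst u w d hxw hcd hxu.ne' huw (h ▸ hβ.2)
    rcases eq_or_ne b₁ a with rfl | h
    · exact ⟨b₂, fun h => hb12 h.symm, (hnb b₂ hb₂).1, (hnb b₂ hb₂).2, hb₂⟩
    · exact ⟨b₁, h, (hnb b₁ hb₁).1, (hnb b₁ hb₁).2, hb₁⟩
  obtain ⟨β, hβ1, hβ2, hβ3, hβmem⟩ :=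
    get_fresh u₁ a₁ a₂ a₃ u₂ u₃ hu₁ hu₂ hu₃ hne12 hne13 hc₁ hc₂ hc₃
  obtain ⟨γ, hγ2, hγ1, hγ3, hγmem⟩ :=
    get_fresh u₂ a₂ a₁ a₃ u₁ u₃ hu₂ hu₁ hu₃ hne12.symm hne23 hc₂ hc₁ hc₃
  obtain ⟨y, hy, hcy⟩ := starred_edge hβmem
  obtain ⟨z, hz, hcz⟩ := starred_edge hγmem
  have hyx : y ≠ x := by
    rintro rfl
    apply hβ1
    rw [← hcy, ← hc₁, Sym2.eq_swap]
  have hzx : z ≠ x := by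
    rintro rfl
    apply hγ2
    rw [← hcz, ← hc₂, Sym2.eq_swap]
  have e1 : y.1 = u₂.1 :=
    step u₁ u₂ y a₁ a₂ β hu₁ hu₂ hy hyx hne12 hc₁ hc₂ hcy h12 hβ1 hβ2 hS1 hS2 hβmem.2
  have e2 : y.1 = u₃.1 :=
    step u₁ u₃ y a₁ a₃ β hu₁ hu₃ hy hyx hne13 hc₁ hc₃ hcy h13 hβ1 hβ3 hS1 hS3 hβmem.2
  have e3 : z.1 = u₁.1 :=
    step u₂ u₁ z a₂ a₁ γ hu₂ hu₁ hz hzx hne12.symm hc₂ hc₁ hcz h12.symm hγ2 hγ1 hS2 hS1 hγmem.2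
  have e4 : z.1 = u₃.1 :=
    step u₂ u₃ z a₂ a₃ γ hu₂ hu₃ hz hzx hne23 hc₂ hc₃ hcz h23 hγ2 hγ3 hS2 hS3 hγmem.2
  exact ((hadj u₁ y).mp hy) (by rw [← e3, e4, ← e2])

/-- In a coloring of `K_{n₁,…,n_r}` with no rainbow `C₄` in which at least two colors
are starred at every vertex, exactly two colors are starred at every vertex. -/
theorem starred_degree_eq_two (r : ℕ) (n : ℕ → ℕ) (hr : 3 ≤ r)
    {α : Type*} (c : Sym2 ((i : Fin r) × Fin (n i)) → α)
    (hnr : ¬ RainbowC4 (Kpartite r n) c)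
    (hstar : ∀ v : (i : Fin r) × Fin (n i), ∃ a b : α, a ≠ b ∧
      a ∈ starredColors (Kpartite r n) c v ∧ b ∈ starredColors (Kpartite r n) c v)
    (x : (i : Fin r) × Fin (n i)) :
    (starredColors (Kpartite r n) c x).ncard = 2 := by
  obtain ⟨a, b, hab, ha, hb⟩ := hstar x
  have hset : starredColors (Kpartite r n) c x = {a, b} := by
    apply Set.eq_of_subset_of_subset
    · intro d hd
      by_contra hdab
      rw [Set.mem_insert_iff, Set.mem_singleton_iff] at hdab
      push_neg at hdab
      exact no_three r n c hnr hstar x a b d hab hdab.1.symm hdab.2.symm ha hb hd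
    · rintro d hd
      rcases hd with rfl | rfl
      · exact ha
      · exact hb
  rw [hset, Set.ncard_pair hab]
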